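/- (Per-step potential decrease for the multiplicative-weights update.) Let X be a finite set, μ a probability distribution on X, and ε ∈ (0,1). Let g* : X → Δ_L, h : X → ℝ^L, and f : X → ℝ^L with ‖f(x)‖∞ ≤ 1 for all x. Let ĝ : X → Δ_L satisfy Σ_{y=1}^L |ĝ(x)_y − softmax(h(x))_y| ≤ ε/10 for every x ∈ X, and suppose ⟨ĝ − g*, f⟩_μ > ε. Then Γ_μ(g*, h − εf) < Γ_μ(g*, h) − ε²/4. -/

import Mathlib

noncomputable section

/-- Standard inner product on `ℝ^L`. -/
def dot {L : ℕ} (g h : Fin L → ℝ) : ℝ := ∑ y, g y * h y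

/-- The probability simplex `Δ_L ⊆ ℝ^L`. -/
def simplex (L : ℕ) : Set (Fin L → ℝ) :=
  {v | (∀ y, 0 ≤ v y) ∧ ∑ y, v y = 1}

/-- Negative Shannon entropy `φ_Sh(g) = ∑_y g_y ln g_y` (with `0 · ln 0 = 0`). -/
def negEnt {L : ℕ} (g : Fin L → ℝ) : ℝ := ∑ y, g y * Real.log (g y)

/-- Log-sum-exp function `lse(h) = ln (∑_y e^{h_y})`, the convex conjugate of `negEnt`. -/
def lse {L : ℕ} (h : Fin L → ℝ) : ℝ := Real.log (∑ y, Real.exp (h y))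

/-- Softmax function `softmax(h)_y = e^{h_y} / ∑_z e^{h_z}`. -/
def softmax {L : ℕ} (h : Fin L → ℝ) : Fin L → ℝ :=
  fun y => Real.exp (h y) / ∑ z, Real.exp (h z)

/-- Fenchel–Young divergence `Γ(g,h) = φ_Sh(g) + lse(h) - ⟨g,h⟩`. -/
def FYsh {L : ℕ} (g h : Fin L → ℝ) : ℝ := negEnt g + lse h - dot g h

/-- `Γ_μ(g,h) = E_{x∼μ}[Γ(g(x),h(x))]`. -/
def FYmu {X : Type*} [Fintype X] {L : ℕ} (μ : X → ℝ)
    (g h : X → Fin L → ℝ) : ℝ := ∑ x, μ x * FYsh (g x) (h x)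

/-- `⟨g,h⟩_μ = E_{x∼μ}[⟨g(x),h(x)⟩]`. -/
def innerMu {X : Type*} [Fintype X] {L : ℕ} (μ : X → ℝ)
    (g h : X → Fin L → ℝ) : ℝ := ∑ x, μ x * dot (g x) (h x)

/-- Per-step potential decrease for the multiplicative-weights update: if
`ĝ` is `ε/10`-close in `ℓ1` to `softmax ∘ h` pointwise, `‖f(x)‖∞ ≤ 1`, and
`⟨ĝ - g*, f⟩_μ > ε`, then `Γ_μ(g*, h - εf) < Γ_μ(g*, h) - ε²/4`. -/
private lemma hasDerivAt_wsum {L : ℕ} (w v : Fin L → ℝ) (t : ℝ) :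
    HasDerivAt (fun s => ∑ y, w y * Real.exp (s * v y))
      (∑ y, w y * v y * Real.exp (t * v y)) t := by
  have H : ∀ y : Fin L, y ∈ Finset.univ → HasDerivAt (fun s => w y * Real.exp (s * v y))
      (w y * v y * Real.exp (t * v y)) t := by
    intro y _
    have h1 : HasDerivAt (fun s : ℝ => s * v y) (v y) t := hasDerivAt_mul_const (v y)
    have h2 := (h1.exp).const_mul (w y)
    rw [show w y * v y * Real.exp (t * v y) = w y * (Real.exp (t * v y) * v y) by ring]
    exact h2
  simpa using HasDerivAt.fun_sum H

private lemma log_wsum_exp_le {L : ℕ} (p v : Fin L → ℝ) (c : ℝ)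
    (hp0 : ∀ y, 0 ≤ p y) (hp1 : ∑ y, p y = 1) (hv : ∀ y, |v y| ≤ c) :
    Real.log (∑ y, p y * Real.exp (v y)) ≤ (∑ y, p y * v y) + c ^ 2 / 2 := by
  set F : ℝ → ℝ := fun t => ∑ y, p y * Real.exp (t * v y) with hF
  set F1 : ℝ → ℝ := fun t => ∑ y, (p y * v y) * Real.exp (t * v y) with hF1
  set F2 : ℝ → ℝ := fun t => ∑ y, (p y * v y * v y) * Real.exp (t * v y) with hF2
  obtain ⟨y0, hy0⟩ : ∃ y, 0 < p y := by
    by_contra hcon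
    push_neg at hcon
    have : ∑ y, p y = 0 := Finset.sum_eq_zero fun y _ => le_antisymm (hcon y) (hp0 y)
    rw [this] at hp1; norm_num at hp1
  have hc0 : 0 ≤ c := le_trans (abs_nonneg _) (hv y0)
  have hFpos : ∀ t, 0 < F t := by
    intro t
    have h1 : p y0 * Real.exp (t * v y0) ≤ F t :=
      Finset.single_le_sum (f := fun y => p y * Real.exp (t * v y))
        (fun y _ => mul_nonneg (hp0 y) (Real.exp_pos _).le) (Finset.mem_univ y0)
    have h2 := mul_pos hy0 (Real.exp_pos (t * v y0))
    linarith
  have hFd : ∀ t, HasDerivAt F (F1 t) t := fun t => by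
    simpa [hF, hF1, mul_assoc] using hasDerivAt_wsum p v t
  have hF1d : ∀ t, HasDerivAt F1 (F2 t) t := fun t => by
    simpa [hF1, hF2, mul_assoc] using hasDerivAt_wsum (fun y => p y * v y) v t
  have hF2le : ∀ t, F2 t ≤ c ^ 2 * F t := by
    intro t
    rw [hF2, hF, Finset.mul_sum]
    refine Finset.sum_le_sum fun y _ => ?_
    have h1 : v y * v y ≤ c ^ 2 := by
      have := abs_mul_abs_self (v y)
      nlinarith [hv y, abs_nonneg (v y)]
    have := Real.exp_pos (t * v y)
    nlinarith [hp0 y, mul_nonneg (hp0 y) (le_of_lt this)]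
  set D : ℝ → ℝ := fun t => c ^ 2 * t + F1 0 / F 0 - F1 t / F t with hD
  have hDd : ∀ t, HasDerivAt D
      (c ^ 2 - (F2 t * F t - F1 t * F1 t) / (F t) ^ 2) t := by
    intro t
    have hq : HasDerivAt (fun s => F1 s / F s)
        ((F2 t * F t - F1 t * F1 t) / (F t) ^ 2) t :=
      (hF1d t).div (hFd t) (hFpos t).ne'
    have hlin : HasDerivAt (fun s : ℝ => c ^ 2 * s + F1 0 / F 0) (c ^ 2) t := by
      simpa using ((hasDerivAt_id t).const_mul (c ^ 2)).add_const (F1 0 / F 0)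
    simpa [hD] using hlin.fun_sub hq
  have hDderiv_nonneg : ∀ t, 0 ≤ c ^ 2 - (F2 t * F t - F1 t * F1 t) / (F t) ^ 2 := by
    intro t
    have hF2' := hF2le t
    have hFp := hFpos t
    have hdiv : (F2 t * F t - F1 t * F1 t) / (F t) ^ 2 ≤ c ^ 2 := by
      rw [div_le_iff₀ (by positivity)]
      nlinarith [sq_nonneg (F1 t)]
    linarith
  have hDmono : Monotone D :=
    monotone_of_deriv_nonneg (fun t => (hDd t).differentiableAt)
      (fun t => by rw [(hDd t).deriv]; exact hDderiv_nonneg t)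
  have hD0 : D 0 = 0 := by simp [hD]
  set ψ : ℝ → ℝ := fun t => c ^ 2 / 2 * t ^ 2 + (F1 0 / F 0) * t - Real.log (F t) with hψ
  have hψd : ∀ t, HasDerivAt ψ (D t) t := by
    intro t
    have h1 : HasDerivAt (fun s : ℝ => c ^ 2 / 2 * s ^ 2) (c ^ 2 / 2 * (2 * t)) t := by
      simpa using (hasDerivAt_pow 2 t).const_mul (c ^ 2 / 2)
    have h2 : HasDerivAt (fun s : ℝ => (F1 0 / F 0) * s) (F1 0 / F 0) t := by
      simpa using (hasDerivAt_id t).const_mul (F1 0 / F 0)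
    have h3 : HasDerivAt (fun s => Real.log (F s)) (F1 t / F t) t :=
      (hFd t).log (hFpos t).ne'
    have := (h1.fun_add h2).fun_sub h3
    rw [show D t = c ^ 2 / 2 * (2 * t) + F1 0 / F 0 - F1 t / F t by simp [hD]; ring]
    exact this
  have hmono : MonotoneOn ψ (Set.Icc (0:ℝ) 1) := by
    refine monotoneOn_of_deriv_nonneg (convex_Icc 0 1)
      (fun t _ => (hψd t).continuousAt.continuousWithinAt)
      (fun t _ => (hψd t).differentiableAt.differentiableWithinAt) ?_
    intro t ht
    rw [interior_Icc] at ht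
    rw [(hψd t).deriv]
    have := hDmono ht.1.le
    rw [hD0] at this
    exact this
  have hψ01 : ψ 0 ≤ ψ 1 :=
    hmono (by norm_num) (by norm_num) (by norm_num)
  have hF0 : F 0 = 1 := by simp [hF, hp1]
  have hF10 : F1 0 = ∑ y, p y * v y := by simp [hF1]
  have hF1' : F 1 = ∑ y, p y * Real.exp (v y) := by simp [hF]
  rw [hψ] at hψ01
  simp only [hF0, hF10, hF1'] at hψ01
  simp at hψ01
  linarith [hψ01]

private lemma lse_shift_le {L : ℕ} (hL : 0 < L) (h v : Fin L → ℝ) (c : ℝ)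
    (hv : ∀ y, |v y| ≤ c) :
    lse (fun y => h y + v y) ≤ lse h + (∑ y, softmax h y * v y) + c ^ 2 / 2 := by
  have : Nonempty (Fin L) := ⟨⟨0, hL⟩⟩
  have hS : 0 < ∑ z, Real.exp (h z) :=
    Finset.sum_pos (fun z _ => Real.exp_pos _) Finset.univ_nonempty
  have hp0 : ∀ y, 0 ≤ softmax h y := fun y => by
    unfold softmax; positivity
  have hp1 : ∑ y, softmax h y = 1 := by
    unfold softmax
    rw [← Finset.sum_div, div_self hS.ne']
  have hkey := log_wsum_exp_le (softmax h) v c hp0 hp1 hv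
  have hA : ∑ y, softmax h y * Real.exp (v y)
      = (∑ y, Real.exp (h y + v y)) / (∑ z, Real.exp (h z)) := by
    rw [Finset.sum_div]
    refine Finset.sum_congr rfl fun y _ => ?_
    unfold softmax
    rw [Real.exp_add]
    ring
  have hnum : 0 < ∑ y, Real.exp (h y + v y) :=
    Finset.sum_pos (fun z _ => Real.exp_pos _) Finset.univ_nonempty
  have hlog : Real.log (∑ y, softmax h y * Real.exp (v y))
      = lse (fun y => h y + v y) - lse h := by
    rw [hA, Real.log_div hnum.ne' hS.ne']
    rfl
  rw [hlog] at hkey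
  linarith

theorem mw_potential_decrease {X : Type*} [Fintype X] {L : ℕ} (hL : 0 < L)
    (μ : X → ℝ) (hμ0 : ∀ x, 0 ≤ μ x) (hμ1 : ∑ x, μ x = 1)
    (ε : ℝ) (hε0 : 0 < ε) (hε1 : ε < 1)
    (gs h f gapprox : X → Fin L → ℝ)
    (hgs : ∀ x, gs x ∈ simplex L)
    (hf : ∀ x y, |f x y| ≤ 1)
    (hgapprox : ∀ x, gapprox x ∈ simplex L)
    (hclose : ∀ x, ∑ y, |gapprox x y - softmax (h x) y| ≤ ε / 10)
    (hdist : innerMu μ (fun x => gapprox x - gs x) f > ε) :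
    FYmu μ gs (fun x => h x - ε • f x) < FYmu μ gs h - ε ^ 2 / 4 := by
  -- pointwise key bound
  have key : ∀ x, FYsh (gs x) (h x - ε • f x)
      ≤ FYsh (gs x) (h x) - ε * dot (gapprox x - gs x) (f x) + (3/5) * ε ^ 2 := by
    intro x
    have h1 : lse (fun y => h x y + (-(ε * f x y)))
        ≤ lse (h x) + (∑ y, softmax (h x) y * (-(ε * f x y))) + ε ^ 2 / 2 := by
      refine lse_shift_le hL (h x) _ ε fun y => ?_
      rw [abs_neg, abs_mul, abs_of_pos hε0]
      nlinarith [hf x y, abs_nonneg (f x y)]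
    have heq : (h x - ε • f x) = fun y => h x y + (-(ε * f x y)) := by
      funext y; simp; ring
    rw [← heq] at h1
    have h2 : (∑ y, softmax (h x) y * (-(ε * f x y)))
        = -(ε * dot (softmax (h x)) (f x)) := by
      rw [dot, Finset.mul_sum, ← Finset.sum_neg_distrib]
      exact Finset.sum_congr rfl fun y _ => by ring
    -- closeness: dot gapprox f ≤ dot softmax f + ε/10
    have h3 : dot (gapprox x) (f x) - dot (softmax (h x)) (f x) ≤ ε / 10 := by
      have : dot (gapprox x) (f x) - dot (softmax (h x)) (f x)
          = ∑ y, (gapprox x y - softmax (h x) y) * f x y := by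
        rw [dot, dot, ← Finset.sum_sub_distrib]
        exact Finset.sum_congr rfl fun y _ => by ring
      rw [this]
      calc ∑ y, (gapprox x y - softmax (h x) y) * f x y
          ≤ ∑ y, |gapprox x y - softmax (h x) y| := by
            refine Finset.sum_le_sum fun y _ => ?_
            calc (gapprox x y - softmax (h x) y) * f x y
                ≤ |(gapprox x y - softmax (h x) y) * f x y| := le_abs_self _
              _ = |gapprox x y - softmax (h x) y| * |f x y| := abs_mul _ _
              _ ≤ |gapprox x y - softmax (h x) y| * 1 :=
                  mul_le_mul_of_nonneg_left (hf x y) (abs_nonneg _)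
              _ = |gapprox x y - softmax (h x) y| := mul_one _
        _ ≤ ε / 10 := hclose x
    have h4 : dot (gs x) (h x - ε • f x) = dot (gs x) (h x) - ε * dot (gs x) (f x) := by
      rw [dot, dot, dot, Finset.mul_sum, ← Finset.sum_sub_distrib]
      exact Finset.sum_congr rfl fun y _ => by simp; ring
    have h5 : dot (gapprox x - gs x) (f x)
        = dot (gapprox x) (f x) - dot (gs x) (f x) := by
      rw [dot, dot, dot, ← Finset.sum_sub_distrib]
      exact Finset.sum_congr rfl fun y _ => by simp; ring
    rw [FYsh, FYsh, h4, h5]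
    rw [h2] at h1
    nlinarith [h1, h3]
  -- global assembly
  have hsum : FYmu μ gs (fun x => h x - ε • f x)
      ≤ FYmu μ gs h - ε * innerMu μ (fun x => gapprox x - gs x) f + (3/5) * ε ^ 2 := by
    rw [FYmu, FYmu, innerMu]
    have : ∀ x ∈ Finset.univ (α := X), μ x * FYsh (gs x) (h x - ε • f x)
        ≤ μ x * (FYsh (gs x) (h x) - ε * dot (gapprox x - gs x) (f x) + (3/5) * ε ^ 2) :=
      fun x _ => mul_le_mul_of_nonneg_left (key x) (hμ0 x)
    calc ∑ x, μ x * FYsh (gs x) (h x - ε • f x)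
        ≤ ∑ x, μ x * (FYsh (gs x) (h x) - ε * dot (gapprox x - gs x) (f x) + (3/5) * ε ^ 2) :=
          Finset.sum_le_sum this
      _ = ∑ x, μ x * FYsh (gs x) (h x) - ε * ∑ x, μ x * dot (gapprox x - gs x) (f x)
            + (3/5) * ε ^ 2 * ∑ x, μ x := by
          rw [Finset.mul_sum, Finset.mul_sum, ← Finset.sum_sub_distrib, ← Finset.sum_add_distrib]
          exact Finset.sum_congr rfl fun x _ => by ring
      _ = _ := by rw [hμ1]; ring
  have hstrict : ε * ε < ε * innerMu μ (fun x => gapprox x - gs x) f :=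
    mul_lt_mul_of_pos_left hdist hε0
  nlinarith [hsum, hstrict, sq_nonneg ε, hε0]
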